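/- arXiv:1709.03783 — 2 statements merged into one kernel-verified Lean document; each statement's English description precedes it below -/
import Mathlib

section
/- Consider the homogeneous periodic system of matrix equations with s = H (conjugate transpose): A_k X_k B_k − C_k X_{k+1} D_k = 0 for k = 1,…,r−1 and A_r X_r B_r − C_r X_1^H D_r = 0, where all matrices are n×n complex. This system has only the trivial solution X_1 = ⋯ = X_r = 0 if and only if the doubled linear system A_k X_k B_k − C_k X_{k+1} D_k = 0 (k = 1,…,r−1), A_r X_r B_r − C_r X_{r+1} D_r = 0, B_k^H X_{r+k} A_k^H − D_k^H X_{r+k+1} C_k^H = 0 (k = 1,…,r−1), B_r^H X_{2r} A_r^H − D_r^H X_1 C_r^H = 0, in the 2r unknowns X_1,…,X_{2r}, has only the trivial solution. -/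
open Matrix

/-- The homogeneous periodic system with `s = H` has only the trivial solution iff the
doubled linear system (in `2r` unknowns, obtained by adjoining the conjugate-transposed
equations) has only the trivial solution. Indices are 0-based: equations `k = 0,…,r-2`
plus a closing equation. -/
theorem stmt_7 (n r : ℕ) (hr : 1 ≤ r) (A B C D : ℕ → Matrix (Fin n) (Fin n) ℂ) :
    (∀ X : ℕ → Matrix (Fin n) (Fin n) ℂ,
        (∀ k < r - 1, A k * X k * B k - C k * X (k + 1) * D k = 0) →
        A (r - 1) * X (r - 1) * B (r - 1) - C (r - 1) * (X 0)ᴴ * D (r - 1) = 0 →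
        ∀ k < r, X k = 0) ↔
    (∀ Y : ℕ → Matrix (Fin n) (Fin n) ℂ,
        (∀ k < r - 1, A k * Y k * B k - C k * Y (k + 1) * D k = 0) →
        A (r - 1) * Y (r - 1) * B (r - 1) - C (r - 1) * Y r * D (r - 1) = 0 →
        (∀ k < r - 1,
          (B k)ᴴ * Y (r + k) * (A k)ᴴ - (D k)ᴴ * Y (r + k + 1) * (C k)ᴴ = 0) →
        (B (r - 1))ᴴ * Y (2 * r - 1) * (A (r - 1))ᴴ -
            (D (r - 1))ᴴ * Y 0 * (C (r - 1))ᴴ = 0 →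
        ∀ k < 2 * r, Y k = 0) := by
  constructor
  · intro h Y h1 h2 h3 h4
    -- conjugate-transposed versions of h3 and h4
    have hc3 : ∀ k < r - 1,
        A k * (Y (r + k))ᴴ * B k - C k * (Y (r + (k + 1)))ᴴ * D k = 0 := by
      intro k hk
      have := congrArg conjTranspose (h3 k hk)
      simpa [Matrix.conjTranspose_sub, Matrix.conjTranspose_mul, Matrix.mul_assoc,
        Nat.add_assoc] using this
    have hidx : r + (r - 1) = 2 * r - 1 := by omega
    have hc4 : A (r - 1) * (Y (r + (r - 1)))ᴴ * B (r - 1)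
        - C (r - 1) * (Y 0)ᴴ * D (r - 1) = 0 := by
      rw [hidx]
      have := congrArg conjTranspose h4
      simpa [Matrix.conjTranspose_sub, Matrix.conjTranspose_mul, Matrix.mul_assoc] using this
    -- the sum solves the original system
    have hZsol : ∀ k < r, (fun k => Y k + (Y (r + k))ᴴ) k = 0 := by
      apply h
      · intro k hk
        have hexp : A k * (Y k + (Y (r + k))ᴴ) * B k
            - C k * (Y (k + 1) + (Y (r + (k + 1)))ᴴ) * D k =
            (A k * Y k * B k - C k * Y (k + 1) * D k) +
            (A k * (Y (r + k))ᴴ * B k - C k * (Y (r + (k + 1)))ᴴ * D k) := by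
          noncomm_ring
        rw [hexp, h1 k hk, hc3 k hk, add_zero]
      · have hexp : A (r - 1) * (Y (r - 1) + (Y (r + (r - 1)))ᴴ) * B (r - 1)
            - C (r - 1) * (Y 0 + (Y (r + 0))ᴴ)ᴴ * D (r - 1) =
            (A (r - 1) * Y (r - 1) * B (r - 1) - C (r - 1) * Y (r + 0) * D (r - 1)) +
            (A (r - 1) * (Y (r + (r - 1)))ᴴ * B (r - 1)
              - C (r - 1) * (Y 0)ᴴ * D (r - 1)) := by
          simp only [Matrix.conjTranspose_add, Matrix.conjTranspose_conjTranspose]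
          noncomm_ring
        rw [hexp, hc4, add_zero, Nat.add_zero, h2]
    have hY0 : (Y 0)ᴴ = - Y r := by
      have h0 : Y 0 + (Y r)ᴴ = 0 := hZsol 0 hr
      have h1' : (Y r)ᴴ = - Y 0 := by linear_combination (norm := abel) h0
      have h2' := congrArg conjTranspose h1'
      simp only [Matrix.conjTranspose_neg, Matrix.conjTranspose_conjTranspose] at h2'
      rw [h2']; simp
    -- i • Y solves the original system
    have hWsol : ∀ k < r, (fun k => Complex.I • Y k) k = 0 := by
      apply h
      · intro k hk
        rw [mul_smul_comm, smul_mul_assoc, mul_smul_comm, smul_mul_assoc, ← smul_sub,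
          h1 k hk, smul_zero]
      · have hsm : (Complex.I • Y 0)ᴴ = Complex.I • Y r := by
          rw [Matrix.conjTranspose_smul, hY0]
          simp [Complex.star_def, Complex.conj_I]
        rw [hsm, mul_smul_comm, smul_mul_assoc, mul_smul_comm, smul_mul_assoc, ← smul_sub,
          h2, smul_zero]
    have hYr : ∀ k < r, Y k = 0 := by
      intro k hk
      have hI : Complex.I • Y k = 0 := hWsol k hk
      rcases smul_eq_zero.mp hI with h' | h'
      · exact absurd h' Complex.I_ne_zero
      · exact h'
    intro k hk
    by_cases hkr : k < r
    · exact hYr k hkr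
    · have hkk : r + (k - r) = k := by omega
      have hz : Y (k - r) + (Y (r + (k - r)))ᴴ = 0 := hZsol (k - r) (by omega)
      rw [hkk, hYr (k - r) (by omega), zero_add] at hz
      calc Y k = ((Y k)ᴴ)ᴴ := by simp
        _ = 0 := by rw [hz]; simp
  · intro h X h1 h2 k hk
    set Y : ℕ → Matrix (Fin n) (Fin n) ℂ :=
      fun j => if j < r then X j else (X (j - r))ᴴ with hYdef
    have hY1 : ∀ k < r - 1, A k * Y k * B k - C k * Y (k + 1) * D k = 0 := by
      intro k hk'
      have e1 : Y k = X k := by simp only [hYdef]; rw [if_pos (by omega)]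
      have e2 : Y (k + 1) = X (k + 1) := by simp only [hYdef]; rw [if_pos (by omega)]
      rw [e1, e2]; exact h1 k hk'
    have hY2 : A (r - 1) * Y (r - 1) * B (r - 1) - C (r - 1) * Y r * D (r - 1) = 0 := by
      have e1 : Y (r - 1) = X (r - 1) := by simp only [hYdef]; rw [if_pos (by omega)]
      have e2 : Y r = (X 0)ᴴ := by
        have hi : r - r = 0 := by omega
        simp only [hYdef]; rw [if_neg (by omega), hi]
      rw [e1, e2]; exact h2
    have hY3 : ∀ k < r - 1,
        (B k)ᴴ * Y (r + k) * (A k)ᴴ - (D k)ᴴ * Y (r + k + 1) * (C k)ᴴ = 0 := by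
      intro k hk'
      have e1 : Y (r + k) = (X k)ᴴ := by
        have hi : r + k - r = k := by omega
        simp only [hYdef]; rw [if_neg (by omega), hi]
      have e2 : Y (r + k + 1) = (X (k + 1))ᴴ := by
        have hi : r + k + 1 - r = k + 1 := by omega
        simp only [hYdef]; rw [if_neg (by omega), hi]
      rw [e1, e2]
      have := congrArg conjTranspose (h1 k hk')
      simpa [Matrix.conjTranspose_sub, Matrix.conjTranspose_mul, Matrix.mul_assoc] using this
    have hY4 : (B (r - 1))ᴴ * Y (2 * r - 1) * (A (r - 1))ᴴ -
        (D (r - 1))ᴴ * Y 0 * (C (r - 1))ᴴ = 0 := by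
      have e1 : Y (2 * r - 1) = (X (r - 1))ᴴ := by
        have hi : 2 * r - 1 - r = r - 1 := by omega
        simp only [hYdef]; rw [if_neg (by omega), hi]
      have e2 : Y 0 = X 0 := by simp only [hYdef]; rw [if_pos (by omega)]
      rw [e1, e2]
      have := congrArg conjTranspose h2
      simpa [Matrix.conjTranspose_sub, Matrix.conjTranspose_mul, Matrix.mul_assoc] using this
    have := h Y hY1 hY2 hY3 hY4 k (by omega)
    simp only [hYdef] at this
    rwa [if_pos hk] at this
end

section
/- Let y = (N + ΔN)·x with N, ΔN ∈ ℂ^{m×m}, x, y ∈ ℂ^m nonzero, and ‖ΔN‖₂ ≤ ε‖N‖₂ for some ε > 0. Let δy ∈ ℂ^m satisfy ‖δy‖₂ ≤ κ‖y‖₂ for some κ > 0. Then there exists δN ∈ ℂ^{m×m} with y + δy = (N + δN)·x and ‖δN‖₂ ≤ (ε + κ(1 + ε))·‖N‖₂. -/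
open scoped Matrix.Norms.L2Operator

set_option maxHeartbeats 2000000 in
/-- Backward-error absorption lemma: if `y = (N + ΔN)x` with `‖ΔN‖₂ ≤ ε‖N‖₂` and
`‖δy‖₂ ≤ κ‖y‖₂`, then `y + δy = (N + δN)x` for some `δN` with
`‖δN‖₂ ≤ (ε + κ(1 + ε))‖N‖₂`. Matrix norms are L2 operator norms and vectors live in
Euclidean space. -/
theorem stmt_18 (m : ℕ) (N ΔN : Matrix (Fin m) (Fin m) ℂ)
    (x y δy : EuclideanSpace ℂ (Fin m)) (ε κ : ℝ) (hε : 0 < ε) (hκ : 0 < κ)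
    (hx : x ≠ 0) (hy : y ≠ 0)
    (hyx : y = (N + ΔN).mulVec x)
    (hΔN : ‖ΔN‖ ≤ ε * ‖N‖)
    (hδy : ‖δy‖ ≤ κ * ‖y‖) :
    ∃ δN : Matrix (Fin m) (Fin m) ℂ,
      y + δy = (N + δN).mulVec x ∧ ‖δN‖ ≤ (ε + κ * (1 + ε)) * ‖N‖ := by
  have hxn : (0:ℝ) < ‖x‖ := norm_pos_iff.mpr hx
  have hN0 : (0:ℝ) ≤ ‖N‖ := norm_nonneg _
  have hcne : ((‖x‖:ℂ)^2) ≠ 0 := by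
    simp [pow_eq_zero_iff, Complex.ofReal_eq_zero, hxn.ne']
  set M : Matrix (Fin m) (Fin m) ℂ :=
    Matrix.of (fun i j => δy i * (starRingEnd ℂ) (x j) / ((‖x‖:ℂ)^2)) with hM
  -- key: for any v, M *ᵥ v = (⟪x, v⟫ / ‖x‖²) • δy
  have hMv : ∀ v : EuclideanSpace ℂ (Fin m),
      M.mulVec v = ((inner ℂ x v : ℂ) / ((‖x‖:ℂ)^2)) • δy := by
    intro v
    funext i
    show ∑ j, δy i * (starRingEnd ℂ) (x j) / ((‖x‖:ℂ)^2) * v j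
        = ((inner ℂ x v : ℂ) / ((‖x‖:ℂ)^2)) * δy i
    have hinner : (inner ℂ x v : ℂ) = ∑ j, (starRingEnd ℂ) (x j) * v j := by
      simp [PiLp.inner_apply, RCLike.inner_apply, mul_comm]
    rw [hinner, div_mul_eq_mul_div, Finset.sum_mul, Finset.sum_div]
    apply Finset.sum_congr rfl
    intros
    ring
  have hMx : M.mulVec x = δy := by
    rw [hMv x]
    have h : (inner ℂ x x : ℂ) = ((‖x‖:ℂ))^2 := by
      rw [inner_self_eq_norm_sq_to_K]
      norm_cast
    rw [h, div_self hcne, one_smul]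
  have hMnorm : ‖M‖ ≤ ‖δy‖ / ‖x‖ := by
    rw [Matrix.l2_opNorm_def]
    apply ContinuousLinearMap.opNorm_le_bound _ (div_nonneg (norm_nonneg _) (norm_nonneg _))
    intro v
    have happ : ((Matrix.toEuclideanLin ≪≫ₗ LinearMap.toContinuousLinearMap) M) v =
        (((inner ℂ x v : ℂ) / ((‖x‖:ℂ)^2)) • δy : EuclideanSpace ℂ (Fin m)) := by
      simp only [LinearEquiv.trans_apply, LinearMap.coe_toContinuousLinearMap',
        Matrix.toEuclideanLin_apply]
      rw [hMv v]
      rfl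
    rw [happ, norm_smul]
    have hCS : ‖(inner ℂ x v : ℂ)‖ ≤ ‖x‖ * ‖v‖ := norm_inner_le_norm x v
    have hnc : ‖((inner ℂ x v : ℂ) / ((‖x‖:ℂ)^2))‖ = ‖(inner ℂ x v : ℂ)‖ / ‖x‖^2 := by
      rw [norm_div]
      norm_num
    rw [hnc]
    calc ‖(inner ℂ x v : ℂ)‖ / ‖x‖^2 * ‖δy‖
        ≤ (‖x‖ * ‖v‖) / ‖x‖^2 * ‖δy‖ := by gcongr
      _ = ‖δy‖ / ‖x‖ * ‖v‖ := by
          field_simp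
  refine ⟨ΔN + M, ?_, ?_⟩
  · rw [← add_assoc, Matrix.add_mulVec, Matrix.add_mulVec, hMx, hyx, Matrix.add_mulVec]
  · have hymul : ‖y‖ ≤ (1 + ε) * ‖N‖ * ‖x‖ := by
      have h1 : ‖y‖ ≤ ‖N + ΔN‖ * ‖x‖ := by
        rw [show y = (EuclideanSpace.equiv (Fin m) ℂ).symm ((N + ΔN).mulVec x) from congrArg (EuclideanSpace.equiv (Fin m) ℂ).symm hyx]
        exact Matrix.l2_opNorm_mulVec (N + ΔN) x
      have h2 : ‖N + ΔN‖ ≤ ‖N‖ + ε * ‖N‖ := le_trans (norm_add_le _ _) (by linarith)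
      calc ‖y‖ ≤ ‖N + ΔN‖ * ‖x‖ := h1
        _ ≤ (‖N‖ + ε * ‖N‖) * ‖x‖ := by gcongr
        _ = (1 + ε) * ‖N‖ * ‖x‖ := by ring
    have hMb : ‖M‖ ≤ κ * (1 + ε) * ‖N‖ := by
      calc ‖M‖ ≤ ‖δy‖ / ‖x‖ := hMnorm
        _ ≤ κ * ‖y‖ / ‖x‖ := by gcongr
        _ ≤ κ * ((1 + ε) * ‖N‖ * ‖x‖) / ‖x‖ := by gcongr
        _ = κ * (1 + ε) * ‖N‖ := by field_simp
    calc ‖ΔN + M‖ ≤ ‖ΔN‖ + ‖M‖ := norm_add_le _ _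
      _ ≤ ε * ‖N‖ + κ * (1 + ε) * ‖N‖ := by linarith
      _ = (ε + κ * (1 + ε)) * ‖N‖ := by ring
end
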